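/- Let G be a group of exponent dividing 4, metabelian, and nilpotent of class at most 4. Define x ∘ y = x·y·(y,x)² where (a,b) = a⁻¹b⁻¹ab. Then ∘ is an associative operation on G; explicitly, (x ∘ y) ∘ z = x·y·z·(y,x)²(z,y)²(z,x)² = x ∘ (y ∘ z) for all x, y, z ∈ G. -/

import Mathlib

/-- The commutator `(a,b) = a⁻¹ * b⁻¹ * a * b` used in the paper. -/
def paperComm {G : Type*} [Group G] (a b : G) : G := a⁻¹ * b⁻¹ * a * b

/-- The verbal operation `x ∘ y = x * y * (y,x)²`. -/
def starOp {G : Type*} [Group G] (x y : G) : G := x * y * (paperComm y x) ^ 2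

namespace StarOpAux

open scoped commutatorElement

variable {G : Type*} [Group G]

lemma tailize {p q r : G} (h : p * q = q * r) (w : G) : p * (q * w) = q * (r * w) := by
  rw [← mul_assoc, h, mul_assoc]

lemma conj_id {a b : G} (h : a * b = b * a) : b⁻¹ * a * b = a := by
  rw [mul_assoc, h, inv_mul_cancel_left]

lemma conj_eq (a b : G) : b⁻¹ * a * b = a * paperComm a b := by
  unfold paperComm; group

lemma mul_swap (a b : G) : a * b = b * (a * paperComm a b) := by
  unfold paperComm; group

lemma pc_mul_right (z a b : G) :
    paperComm z (a * b) = paperComm z b * (b⁻¹ * paperComm z a * b) := by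
  unfold paperComm; group

lemma pc_mul_left (a b x : G) :
    paperComm (a * b) x = (b⁻¹ * paperComm a x * b) * paperComm b x := by
  unfold paperComm; group

lemma pc_mem_succ (n : ℕ) {u : G} (hu : u ∈ (⊤ : Subgroup G).lowerCentralSeries n) (v : G) :
    paperComm u v ∈ (⊤ : Subgroup G).lowerCentralSeries (n + 1) := by
  have h : paperComm u v = ⁅u⁻¹, v⁻¹⁆ := by simp [paperComm, commutatorElement_def]
  rw [h, Subgroup.lowerCentralSeries_succ]
  exact Subgroup.commutator_mem_commutator (inv_mem hu) (Subgroup.mem_top _)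

lemma pc_mem (a b : G) : paperComm a b ∈ (⊤ : Subgroup G).lowerCentralSeries 1 := by
  have h0 : a ∈ (⊤ : Subgroup G).lowerCentralSeries 0 := by rw [Subgroup.lowerCentralSeries_zero]; trivial
  exact pc_mem_succ 0 h0 b

lemma expand4 (v u k l : G)
    (huv : u * v = v * (u * k)) (hkv : k * v = v * (k * l)) (hlv : l * v = v * l)
    (hku : k * u = u * k) (hlu : l * u = u * l) (hlk : l * k = k * l) :
    (v * u) ^ 4 = v ^ 4 * (u ^ 4 * ((k ^ 4 * (k * k)) * l ^ 4)) := by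
  have p4 : ∀ a : G, a ^ (4 : ℕ) = a * (a * (a * a)) := fun a => by
    rw [show (4:ℕ) = 3 + 1 from rfl, pow_succ, show (3:ℕ) = 2 + 1 from rfl, pow_succ,
      pow_two, mul_assoc, mul_assoc]
  rw [p4, p4, p4, p4, p4]
  simp only [mul_assoc, tailize huv, tailize hkv, tailize hlv, tailize hku, tailize hlu,
    tailize hlk, huv, hkv, hlv, hku, hlu, hlk]

lemma sqL (hexp : ∀ x : G, x ^ 4 = 1)
    (hmet : ∀ a ∈ (⊤ : Subgroup G).lowerCentralSeries 1, ∀ b ∈ (⊤ : Subgroup G).lowerCentralSeries 1, a * b = b * a)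
    (hnil : (⊤ : Subgroup G).lowerCentralSeries 4 = ⊥)
    {u : G} (hu : u ∈ (⊤ : Subgroup G).lowerCentralSeries 1) (v : G) :
    paperComm u v * paperComm u v = 1 := by
  have hk1 : paperComm u v ∈ (⊤ : Subgroup G).lowerCentralSeries 1 := pc_mem u v
  have hk2 : paperComm u v ∈ (⊤ : Subgroup G).lowerCentralSeries 2 := pc_mem_succ 1 hu v
  have hl3 : paperComm (paperComm u v) v ∈ (⊤ : Subgroup G).lowerCentralSeries 3 := pc_mem_succ 2 hk2 v
  have hcen : ∀ g : G,
      paperComm (paperComm u v) v * g = g * paperComm (paperComm u v) v := by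
    intro g
    have h4 : ⁅paperComm (paperComm u v) v, g⁆ ∈ (⊤ : Subgroup G).lowerCentralSeries 4 := by
      show _ ∈ (⊤ : Subgroup G).lowerCentralSeries (3 + 1)
      rw [Subgroup.lowerCentralSeries_succ]
      exact Subgroup.commutator_mem_commutator hl3 (Subgroup.mem_top g)
    rw [hnil, Subgroup.mem_bot] at h4
    exact (commutatorElement_eq_one_iff_commute.mp h4).eq
  have h := expand4 v u (paperComm u v) (paperComm (paperComm u v) v)
    (mul_swap u v) (mul_swap (paperComm u v) v) (hcen v)
    (hmet _ hk1 _ hu) (hcen u) (hcen (paperComm u v))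
  simp only [hexp, one_mul, mul_one] at h
  exact h.symm

lemma sq_commute {c z : G} (hcc : paperComm c z * c = c * paperComm c z)
    (h2 : paperComm c z * paperComm c z = 1) : c ^ 2 * z = z * c ^ 2 := by
  rw [pow_two, mul_assoc, mul_swap c z, tailize (mul_swap c z), mul_assoc,
    tailize hcc, h2, mul_one]

section Main

variable (hexp : ∀ x : G, x ^ 4 = 1)
  (hmet : ∀ a ∈ (⊤ : Subgroup G).lowerCentralSeries 1, ∀ b ∈ (⊤ : Subgroup G).lowerCentralSeries 1, a * b = b * a)
  (hnil : (⊤ : Subgroup G).lowerCentralSeries 4 = ⊥)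

include hexp hmet hnil

lemma lhs_eq (x y z : G) :
    starOp (starOp x y) z =
      x * y * z * (paperComm y x) ^ 2 * (paperComm z y) ^ 2 * (paperComm z x) ^ 2 := by
  have hsq : ∀ a b v : G,
      paperComm (paperComm a b) v * paperComm (paperComm a b) v = 1 :=
    fun a b v => sqL hexp hmet hnil (pc_mem a b) v
  have hsq' : ∀ v a b : G,
      paperComm v (paperComm a b) * paperComm v (paperComm a b) = 1 := by
    intro v a b
    have hh : paperComm v (paperComm a b) = (paperComm (paperComm a b) v)⁻¹ := by
      unfold paperComm; group
    rw [hh, ← mul_inv_rev, hsq a b v, inv_one]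
  -- Step 1 : paperComm z (c^2) = 1
  have h1 : paperComm z ((paperComm y x) ^ 2) = 1 := by
    rw [pow_two, pc_mul_right,
      conj_id (hmet _ (pc_mem z (paperComm y x)) _ (pc_mem y x))]
    exact hsq' z y x
  -- Step 2
  have h2 : paperComm z (x * y * (paperComm y x) ^ 2) =
      paperComm z y * (paperComm z x * paperComm (paperComm z x) y) := by
    rw [pc_mul_right z (x * y) ((paperComm y x) ^ 2), h1, one_mul,
      conj_id (hmet _ (pc_mem z (x * y)) _ (pow_mem (pc_mem y x) 2)),
      pc_mul_right z x y, conj_eq (paperComm z x) y]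
  -- Step 3
  have h3 : (paperComm z y * (paperComm z x * paperComm (paperComm z x) y)) ^ 2 =
      (paperComm z y) ^ 2 * (paperComm z x) ^ 2 := by
    have hed : paperComm z x * paperComm z y = paperComm z y * paperComm z x :=
      hmet _ (pc_mem z x) _ (pc_mem z y)
    have hfd : paperComm (paperComm z x) y * paperComm z y =
        paperComm z y * paperComm (paperComm z x) y :=
      hmet _ (pc_mem (paperComm z x) y) _ (pc_mem z y)
    have hfe : paperComm (paperComm z x) y * paperComm z x =
        paperComm z x * paperComm (paperComm z x) y :=
      hmet _ (pc_mem (paperComm z x) y) _ (pc_mem z x)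
    have hff := hsq z x y
    simp only [pow_two, mul_assoc, tailize hed, tailize hfd, tailize hfe,
      hed, hfd, hfe, hff, mul_one]
  show x * y * (paperComm y x) ^ 2 * z *
      paperComm z (x * y * (paperComm y x) ^ 2) ^ 2 = _
  rw [h2, h3]
  have hc2z : (paperComm y x) ^ 2 * z = z * (paperComm y x) ^ 2 :=
    sq_commute (hmet _ (pc_mem (paperComm y x) z) _ (pc_mem y x)) (hsq y x z)
  simp only [mul_assoc]
  rw [tailize hc2z]

lemma rhs_eq (x y z : G) :
    starOp x (starOp y z) =
      x * y * z * (paperComm y x) ^ 2 * (paperComm z y) ^ 2 * (paperComm z x) ^ 2 := by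
  have hsq : ∀ a b v : G,
      paperComm (paperComm a b) v * paperComm (paperComm a b) v = 1 :=
    fun a b v => sqL hexp hmet hnil (pc_mem a b) v
  -- Step 1 : paperComm (d^2) x = 1
  have h1 : paperComm ((paperComm z y) ^ 2) x = 1 := by
    rw [pow_two, pc_mul_left,
      conj_id (hmet _ (pc_mem (paperComm z y) x) _ (pc_mem z y))]
    exact hsq z y x
  -- Step 2
  have h2 : paperComm (y * z * (paperComm z y) ^ 2) x =
      (paperComm y x * paperComm (paperComm y x) z) * paperComm z x := by
    rw [pc_mul_left (y * z) ((paperComm z y) ^ 2) x, h1, mul_one,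
      conj_id (hmet _ (pc_mem (y * z) x) _ (pow_mem (pc_mem z y) 2)),
      pc_mul_left y z x, conj_eq (paperComm y x) z]
  -- Step 3
  have h3 : ((paperComm y x * paperComm (paperComm y x) z) * paperComm z x) ^ 2 =
      (paperComm y x) ^ 2 * (paperComm z x) ^ 2 := by
    have hgc : paperComm (paperComm y x) z * paperComm y x =
        paperComm y x * paperComm (paperComm y x) z :=
      hmet _ (pc_mem (paperComm y x) z) _ (pc_mem y x)
    have hec : paperComm z x * paperComm y x = paperComm y x * paperComm z x :=
      hmet _ (pc_mem z x) _ (pc_mem y x)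
    have heg : paperComm z x * paperComm (paperComm y x) z =
        paperComm (paperComm y x) z * paperComm z x :=
      hmet _ (pc_mem z x) _ (pc_mem (paperComm y x) z)
    have hgg := hsq y x z
    have hgg' : ∀ w : G, paperComm (paperComm y x) z * (paperComm (paperComm y x) z * w) = w :=
      fun w => by rw [← mul_assoc, hgg, one_mul]
    simp only [pow_two, mul_assoc, tailize hgc, tailize hec, tailize heg,
      hgc, hec, heg, hgg', hgg, mul_one]
  show x * (y * z * (paperComm z y) ^ 2) *
      paperComm (y * z * (paperComm z y) ^ 2) x ^ 2 = _
  rw [h2, h3]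
  have hdc : (paperComm z y) ^ 2 * (paperComm y x) ^ 2 =
      (paperComm y x) ^ 2 * (paperComm z y) ^ 2 :=
    hmet _ (pow_mem (pc_mem z y) 2) _ (pow_mem (pc_mem y x) 2)
  simp only [mul_assoc]
  rw [tailize hdc]

end Main

end StarOpAux

/-- In the variety Θ, the operation `x ∘ y = xy(y,x)²` is associative, with
explicit common value `xyz(y,x)²(z,y)²(z,x)²`. -/
theorem starOp_assoc {G : Type*} [Group G]
    (hexp : ∀ x : G, x ^ 4 = 1)
    (hmet : ∀ a ∈ (⊤ : Subgroup G).lowerCentralSeries 1, ∀ b ∈ (⊤ : Subgroup G).lowerCentralSeries 1, a * b = b * a)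
    (hnil : (⊤ : Subgroup G).lowerCentralSeries 4 = ⊥) (x y z : G) :
    starOp (starOp x y) z =
      x * y * z * (paperComm y x) ^ 2 * (paperComm z y) ^ 2 * (paperComm z x) ^ 2 ∧
    starOp x (starOp y z) =
      x * y * z * (paperComm y x) ^ 2 * (paperComm z y) ^ 2 * (paperComm z x) ^ 2 :=
  ⟨StarOpAux.lhs_eq hexp hmet hnil x y z, StarOpAux.rhs_eq hexp hmet hnil x y z⟩
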